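/- arXiv:2603.19450 — 2 statements merged into one kernel-verified Lean document; each statement's English description precedes it below -/
import Mathlib

section
/- Let κ₀ = N(0, Σ₀) on R^d with Σ₀ ≻ 0, and let F ⊆ R^d be a closed convex set containing a point in the support. For λ > 0 let κ*_λ be the Gibbs measure with density proportional to exp(−J_Q(U)/λ)·1_F(U) with respect to κ₀, where J_Q(U) = (1/2)UᵀHU + sᵀU, H ≻ 0. Then J_Q has a unique minimizer U* over F, and for every open neighborhood O of U*, κ*_λ(O) → 1 as λ → 0⁺. -/
open MeasureTheory Real Matrix Filter Topology
open scoped ENNReal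

/-- The Gaussian measure `N(m, S)` on `ℝ^d`, defined through its density with respect to
the Lebesgue measure. -/
noncomputable def gaussian (d : ℕ) (m : Fin d → ℝ) (S : Matrix (Fin d) (Fin d) ℝ) :
    Measure (Fin d → ℝ) :=
  volume.withDensity fun x =>
    ENNReal.ofReal ((Real.sqrt ((2 * Real.pi) ^ d * S.det))⁻¹ *
      Real.exp (-(1 / 2) * ((x - m) ⬝ᵥ S⁻¹.mulVec (x - m))))

section Aux

variable {d : ℕ}

private lemma quad_cont (M : Matrix (Fin d) (Fin d) ℝ) :
    Continuous fun x : Fin d → ℝ => x ⬝ᵥ M.mulVec x :=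
  continuous_id.dotProduct (continuous_const.matrix_mulVec continuous_id)

private lemma J_cont (H : Matrix (Fin d) (Fin d) ℝ) (s : Fin d → ℝ) :
    Continuous fun U : Fin d → ℝ => (1 / 2 : ℝ) * (U ⬝ᵥ H.mulVec U) + s ⬝ᵥ U :=
  (continuous_const.mul (quad_cont H)).add (continuous_const.dotProduct continuous_id)

private lemma quad_pos {M : Matrix (Fin d) (Fin d) ℝ} (hM : M.PosDef) {x : Fin d → ℝ}
    (hx : x ≠ 0) : 0 < x ⬝ᵥ M.mulVec x := by
  have := hM.dotProduct_mulVec_pos hx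
  simpa using this

private lemma N_cont : Continuous fun x : Fin d → ℝ => ∑ i, x i ^ 2 :=
  continuous_finset_sum _ fun i _ => (continuous_apply i).pow 2

private lemma sq_le_N (x : Fin d → ℝ) (i : Fin d) : x i ^ 2 ≤ ∑ j, x j ^ 2 :=
  Finset.single_le_sum (fun j _ => sq_nonneg (x j)) (Finset.mem_univ i)

private lemma N_nonneg (x : Fin d → ℝ) : 0 ≤ ∑ i, x i ^ 2 :=
  Finset.sum_nonneg fun _ _ => sq_nonneg _

private lemma abs_le_sqrtN (x : Fin d → ℝ) (i : Fin d) :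
    |x i| ≤ Real.sqrt (∑ j, x j ^ 2) := by
  rw [← Real.sqrt_sq_eq_abs]
  exact Real.sqrt_le_sqrt (sq_le_N x i)

private lemma N_pos {x : Fin d → ℝ} (hx : x ≠ 0) : 0 < ∑ i, x i ^ 2 := by
  rcases (N_nonneg x).lt_or_eq with h | h
  · exact h
  · exfalso
    apply hx
    funext i
    have h1 := sq_le_N x i
    have h2 : x i ^ 2 = 0 := le_antisymm (by linarith) (sq_nonneg _)
    exact pow_eq_zero_iff (by norm_num) |>.1 h2

/-- Positive-definite quadratic forms dominate a multiple of the euclidean square norm. -/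
private lemma posdef_quad_lb {M : Matrix (Fin d) (Fin d) ℝ} (hM : M.PosDef) :
    ∃ ε > (0:ℝ), ∀ x : Fin d → ℝ, ε * (∑ i, x i ^ 2) ≤ x ⬝ᵥ M.mulVec x := by
  classical
  set S : Set (Fin d → ℝ) := {x | (∑ i, x i ^ 2) = 1} with hS
  have hq_smul : ∀ (c : ℝ) (x : Fin d → ℝ),
      (c • x) ⬝ᵥ M.mulVec (c • x) = c ^ 2 * (x ⬝ᵥ M.mulVec x) := by
    intro c x
    rw [M.mulVec_smul, smul_dotProduct, dotProduct_smul, smul_eq_mul, smul_eq_mul]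
    ring
  have hN_smul : ∀ (c : ℝ) (x : Fin d → ℝ),
      (∑ i, (c • x) i ^ 2) = c ^ 2 * ∑ i, x i ^ 2 := by
    intro c x
    simp [Finset.mul_sum, mul_pow, smul_eq_mul]
  by_cases hSne : S.Nonempty
  · have hSc : IsClosed S := isClosed_eq N_cont continuous_const
    have hsub : S ⊆ Metric.closedBall 0 1 := by
      intro x hx
      rw [Metric.mem_closedBall, dist_zero_right]
      rw [pi_norm_le_iff_of_nonneg zero_le_one]
      intro i
      rw [Real.norm_eq_abs]
      have := abs_le_sqrtN x i
      rw [hx] at this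
      simpa using this
    have hScomp : IsCompact S := (isCompact_closedBall 0 1).of_isClosed_subset hSc hsub
    obtain ⟨x₀, hx₀S, hx₀min⟩ :=
      hScomp.exists_isMinOn hSne (quad_cont M).continuousOn
    have hx₀ne : x₀ ≠ 0 := by
      intro h
      rw [hS] at hx₀S
      simp only [Set.mem_setOf_eq, h] at hx₀S
      simp at hx₀S
    refine ⟨x₀ ⬝ᵥ M.mulVec x₀, quad_pos hM hx₀ne, fun x => ?_⟩
    rcases eq_or_ne x 0 with rfl | hx
    · simp
    · have hNx : 0 < ∑ i, x i ^ 2 := N_pos hx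
      set t : ℝ := Real.sqrt (∑ i, x i ^ 2) with ht
      have ht0 : 0 < t := Real.sqrt_pos.2 hNx
      have ht2 : t ^ 2 = ∑ i, x i ^ 2 := Real.sq_sqrt hNx.le
      have hyS : t⁻¹ • x ∈ S := by
        rw [hS, Set.mem_setOf_eq, hN_smul, ← ht2]
        field_simp
      have hmin := isMinOn_iff.1 hx₀min _ hyS
      have hqy : (t⁻¹ • x) ⬝ᵥ M.mulVec (t⁻¹ • x) = (t⁻¹) ^ 2 * (x ⬝ᵥ M.mulVec x) :=
        hq_smul _ _
      rw [hqy] at hmin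
      have h3 : (x₀ ⬝ᵥ M.mulVec x₀) * t ^ 2 ≤ x ⬝ᵥ M.mulVec x := by
        have hmm := mul_le_mul_of_nonneg_right hmin (sq_nonneg t)
        calc (x₀ ⬝ᵥ M.mulVec x₀) * t ^ 2 ≤ t⁻¹ ^ 2 * (x ⬝ᵥ M.mulVec x) * t ^ 2 := hmm
        _ = x ⬝ᵥ M.mulVec x := by field_simp
      rw [← ht2]
      linarith [h3]
  · refine ⟨1, one_pos, fun x => ?_⟩
    rcases eq_or_ne x 0 with rfl | hx
    · simp
    · exfalso
      apply hSne
      have hNx : 0 < ∑ i, x i ^ 2 := N_pos hx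
      set t : ℝ := Real.sqrt (∑ i, x i ^ 2) with ht
      have ht2 : t ^ 2 = ∑ i, x i ^ 2 := Real.sq_sqrt hNx.le
      refine ⟨t⁻¹ • x, ?_⟩
      rw [hS, Set.mem_setOf_eq, hN_smul, ← ht2]
      have ht0 : 0 < t := Real.sqrt_pos.2 hNx
      field_simp

/-- Existence of a minimiser of the quadratic cost on a nonempty closed set. -/
private lemma exists_min {H : Matrix (Fin d) (Fin d) ℝ} (hH : H.PosDef) (s : Fin d → ℝ)
    {C : Set (Fin d → ℝ)} (hC : IsClosed C) (hne : C.Nonempty) :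
    ∃ V ∈ C, IsMinOn (fun U : Fin d → ℝ => (1 / 2 : ℝ) * (U ⬝ᵥ H.mulVec U) + s ⬝ᵥ U) C V := by
  classical
  obtain ⟨ε, hε, hq⟩ := posdef_quad_lb hH
  obtain ⟨x₀, hx₀⟩ := hne
  set J : (Fin d → ℝ) → ℝ := fun U => (1 / 2 : ℝ) * (U ⬝ᵥ H.mulVec U) + s ⬝ᵥ U with hJdef
  have hJc : Continuous J := J_cont H s
  set K : ℝ := ∑ i, |s i| with hK
  have hK0 : 0 ≤ K := Finset.sum_nonneg fun i _ => abs_nonneg _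
  have key : ∀ x : Fin d → ℝ,
      Real.sqrt (∑ i, x i ^ 2) * (ε / 2 * Real.sqrt (∑ i, x i ^ 2) - K) ≤ J x := by
    intro x
    set t : ℝ := Real.sqrt (∑ i, x i ^ 2) with ht
    have ht2 : t ^ 2 = ∑ i, x i ^ 2 := Real.sq_sqrt (N_nonneg x)
    have h1 : ε / 2 * (∑ i, x i ^ 2) ≤ (1 / 2 : ℝ) * (x ⬝ᵥ H.mulVec x) := by
      nlinarith [hq x]
    have h2 : -(K * t) ≤ s ⬝ᵥ x := by
      have hsx : s ⬝ᵥ x = ∑ i, s i * x i := rfl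
      have habs : |∑ i, s i * x i| ≤ K * t := by
        calc |∑ i, s i * x i| ≤ ∑ i, |s i * x i| := Finset.abs_sum_le_sum_abs _ _
        _ ≤ ∑ i, |s i| * t := by
            refine Finset.sum_le_sum fun i _ => ?_
            rw [abs_mul]
            exact mul_le_mul_of_nonneg_left (abs_le_sqrtN x i) (abs_nonneg _)
        _ = K * t := by rw [hK, Finset.sum_mul]
      rw [hsx]
      linarith [neg_abs_le (∑ i, s i * x i)]
    have hJx : J x = (1 / 2 : ℝ) * (x ⬝ᵥ H.mulVec x) + s ⬝ᵥ x := rfl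
    nlinarith [h1, h2]
  set R : ℝ := max (max 1 (Real.sqrt (∑ i, x₀ i ^ 2))) (2 / ε * (K + |J x₀| + 1)) with hR
  have hR1 : (1:ℝ) ≤ R := le_trans (le_max_left _ _) (le_max_left _ _)
  have hR0 : (0:ℝ) ≤ R := by linarith
  have hRx₀ : Real.sqrt (∑ i, x₀ i ^ 2) ≤ R := le_trans (le_max_right _ _) (le_max_left _ _)
  have hRb : 2 / ε * (K + |J x₀| + 1) ≤ R := le_max_right _ _
  set D : Set (Fin d → ℝ) := C ∩ {x | (∑ i, x i ^ 2) ≤ R ^ 2} with hD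
  have hDc : IsClosed D := hC.inter (isClosed_le N_cont continuous_const)
  have hDsub : D ⊆ Metric.closedBall 0 R := by
    intro x hx
    rw [Metric.mem_closedBall, dist_zero_right, pi_norm_le_iff_of_nonneg hR0]
    intro i
    rw [Real.norm_eq_abs]
    calc |x i| ≤ Real.sqrt (∑ j, x j ^ 2) := abs_le_sqrtN x i
    _ ≤ Real.sqrt (R ^ 2) := Real.sqrt_le_sqrt hx.2
    _ = R := Real.sqrt_sq hR0
  have hDcomp : IsCompact D := (isCompact_closedBall 0 R).of_isClosed_subset hDc hDsub
  have hx₀D : x₀ ∈ D := by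
    refine ⟨hx₀, ?_⟩
    have := pow_le_pow_left₀ (Real.sqrt_nonneg _) hRx₀ 2
    rw [Real.sq_sqrt (N_nonneg x₀)] at this
    exact this
  obtain ⟨V, hVD, hVmin⟩ := hDcomp.exists_isMinOn ⟨x₀, hx₀D⟩ hJc.continuousOn
  refine ⟨V, hVD.1, isMinOn_iff.2 fun y hy => ?_⟩
  by_cases hyD : (∑ i, y i ^ 2) ≤ R ^ 2
  · exact isMinOn_iff.1 hVmin y ⟨hy, hyD⟩
  · push_neg at hyD
    set t : ℝ := Real.sqrt (∑ i, y i ^ 2) with ht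
    have ht2 : t ^ 2 = ∑ i, y i ^ 2 := Real.sq_sqrt (N_nonneg y)
    have htR : R ≤ t := by
      by_contra h
      push_neg at h
      have : t ^ 2 ≤ R ^ 2 := pow_le_pow_left₀ (Real.sqrt_nonneg _) h.le 2
      rw [ht2] at this
      linarith
    have hεR : K + |J x₀| + 1 ≤ ε / 2 * R := by
      have h1 : ε / 2 * (2 / ε * (K + |J x₀| + 1)) = K + |J x₀| + 1 := by
        field_simp
      calc K + |J x₀| + 1 = ε / 2 * (2 / ε * (K + |J x₀| + 1)) := h1.symm
      _ ≤ ε / 2 * R := mul_le_mul_of_nonneg_left hRb (by positivity)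
    have hJy : |J x₀| + 1 ≤ J y := by
      have hk := key y
      rw [← ht] at hk
      have h1t : (1:ℝ) ≤ t := le_trans hR1 htR
      have hRt : ε / 2 * R ≤ ε / 2 * t := mul_le_mul_of_nonneg_left htR (by positivity)
      have hfac2 : |J x₀| + 1 ≤ ε / 2 * t - K := by linarith
      have hb : (0:ℝ) ≤ ε / 2 * t - K := by
        have := abs_nonneg (J x₀); linarith
      have hmul : (|J x₀| + 1) * 1 ≤ (ε / 2 * t - K) * t :=
        mul_le_mul hfac2 h1t zero_le_one hb
      calc |J x₀| + 1 = (|J x₀| + 1) * 1 := (mul_one _).symm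
      _ ≤ (ε / 2 * t - K) * t := hmul
      _ = t * (ε / 2 * t - K) := mul_comm _ _
      _ ≤ J y := hk
    have hVx₀ := isMinOn_iff.1 hVmin x₀ hx₀D
    have hx₀abs : J x₀ ≤ |J x₀| := le_abs_self _
    linarith

/-- The gaussian measure is a finite measure. -/
private lemma gaussian_finite {S0 : Matrix (Fin d) (Fin d) ℝ} (hS0 : S0.PosDef) :
    gaussian d 0 S0 Set.univ < ⊤ := by
  classical
  obtain ⟨ε, hε, hq⟩ := posdef_quad_lb hS0.inv
  set c : ℝ := (Real.sqrt ((2 * Real.pi) ^ d * S0.det))⁻¹ with hc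
  have hc0 : 0 < c := by
    rw [hc]
    have : (0:ℝ) < (2 * Real.pi) ^ d * S0.det :=
      mul_pos (pow_pos (by linarith [Real.pi_pos]) d) hS0.det_pos
    exact inv_pos.2 (Real.sqrt_pos.2 this)
  have h1 : Integrable (fun x : Fin d → ℝ => ∏ i, Real.exp (-(ε/2) * x i ^ 2)) :=
    Integrable.fintype_prod (f := fun (_ : Fin d) (t : ℝ) => Real.exp (-(ε/2) * t ^ 2))
      fun _ => integrable_exp_neg_mul_sq (by positivity)
  have hint : Integrable (fun x : Fin d → ℝ => c * ∏ i, Real.exp (-(ε/2) * x i ^ 2)) :=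
    h1.const_mul c
  unfold gaussian
  rw [withDensity_apply _ MeasurableSet.univ, Measure.restrict_univ]
  have hle : ∀ x : Fin d → ℝ,
      ENNReal.ofReal (c * Real.exp (-(1 / 2) * ((x - 0) ⬝ᵥ S0⁻¹.mulVec (x - 0)))) ≤
      ENNReal.ofReal (c * ∏ i, Real.exp (-(ε/2) * x i ^ 2)) := by
    intro x
    apply ENNReal.ofReal_le_ofReal
    apply mul_le_mul_of_nonneg_left _ hc0.le
    have hprod : (∏ i, Real.exp (-(ε/2) * x i ^ 2)) = Real.exp (-(ε/2) * ∑ i, x i ^ 2) := by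
      rw [← Real.exp_sum]
      congr 1
      rw [Finset.mul_sum]
    rw [hprod, sub_zero]
    apply Real.exp_le_exp.2
    have := hq x
    nlinarith
  exact lt_of_le_of_lt (lintegral_mono hle) hint.lintegral_lt_top

/-- The gaussian measure gives positive mass to sets of positive volume. -/
private lemma gaussian_pos {S0 : Matrix (Fin d) (Fin d) ℝ} (hS0 : S0.PosDef)
    {A : Set (Fin d → ℝ)} (hA : MeasurableSet A) (hvol : 0 < volume A) :
    0 < gaussian d 0 S0 A := by
  classical
  have hc0 : 0 < (Real.sqrt ((2 * Real.pi) ^ d * S0.det))⁻¹ := by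
    have : (0:ℝ) < (2 * Real.pi) ^ d * S0.det :=
      mul_pos (pow_pos (by linarith [Real.pi_pos]) d) hS0.det_pos
    exact inv_pos.2 (Real.sqrt_pos.2 this)
  set φ : (Fin d → ℝ) → ℝ≥0∞ := fun x =>
    ENNReal.ofReal ((Real.sqrt ((2 * Real.pi) ^ d * S0.det))⁻¹ *
      Real.exp (-(1 / 2) * ((x - 0) ⬝ᵥ S0⁻¹.mulVec (x - 0)))) with hφ
  have hφm : Measurable φ := by
    refine (ENNReal.continuous_ofReal.comp ?_).measurable
    exact continuous_const.mul (Real.continuous_exp.comp (continuous_const.mul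
      ((continuous_id.sub continuous_const).dotProduct
        (continuous_const.matrix_mulVec (continuous_id.sub continuous_const)))))
  have hφpos : ∀ x, 0 < φ x := fun x =>
    ENNReal.ofReal_pos.2 (mul_pos hc0 (Real.exp_pos _))
  have key : gaussian d 0 S0 A = ∫⁻ x in A, φ x ∂volume := by
    unfold gaussian
    rw [withDensity_apply _ hA]
  rw [key, pos_iff_ne_zero]
  intro h0
  rw [lintegral_eq_zero_iff hφm] at h0
  have h2 : volume A = 0 := by
    have h1 : ∀ᵐ x ∂(volume.restrict A), False := by
      filter_upwards [h0] with x hx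
      exact (hφpos x).ne' (by simpa using hx)
    rw [ae_iff] at h1
    simpa using h1
  exact hvol.ne' h2

end Aux

/-- Concentration of the constrained Gibbs measure: with `κ₀ = N(0,Σ₀)`, `H ≻ 0`, and a
closed convex feasible set `F` of positive `κ₀`-measure, the quadratic cost `J_Q` has a
unique minimizer `U*` over `F`, and the Gibbs measure with density proportional to
`exp(-J_Q/λ)·1_F` w.r.t. `κ₀` concentrates on any neighborhood of `U*` as `λ → 0⁺`. -/
theorem stmt15 {d : ℕ} (S0 H : Matrix (Fin d) (Fin d) ℝ)
    (hS0 : S0.PosDef) (hH : H.PosDef) (s : Fin d → ℝ)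
    (F : Set (Fin d → ℝ)) (hFc : IsClosed F) (hFconv : Convex ℝ F)
    (hF : 0 < gaussian d 0 S0 F) :
    ∃ Ustar, Ustar ∈ F ∧
      IsMinOn (fun U => (1 / 2) * (U ⬝ᵥ H.mulVec U) + s ⬝ᵥ U) F Ustar ∧
      (∀ V ∈ F, IsMinOn (fun U => (1 / 2) * (U ⬝ᵥ H.mulVec U) + s ⬝ᵥ U) F V →
        V = Ustar) ∧
      ∀ O : Set (Fin d → ℝ), IsOpen O → Ustar ∈ O →
        Filter.Tendsto
          (fun l : ℝ =>
            (((gaussian d 0 S0).withDensity fun U =>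
                ENNReal.ofReal (Real.exp (-((1 / 2) * (U ⬝ᵥ H.mulVec U) + s ⬝ᵥ U) / l) *
                  F.indicator 1 U)) Set.univ)⁻¹ *
            ((gaussian d 0 S0).withDensity fun U =>
                ENNReal.ofReal (Real.exp (-((1 / 2) * (U ⬝ᵥ H.mulVec U) + s ⬝ᵥ U) / l) *
                  F.indicator 1 U)) O)
          (nhdsWithin 0 (Set.Ioi 0)) (nhds 1) := by
  classical
  set J : (Fin d → ℝ) → ℝ := fun U => (1 / 2) * (U ⬝ᵥ H.mulVec U) + s ⬝ᵥ U with hJdef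
  have hJc : Continuous J := J_cont H s
  set κ : Measure (Fin d → ℝ) := gaussian d 0 S0 with hκdef
  have hFmeas : MeasurableSet F := hFc.measurableSet
  have hκfin : κ Set.univ < ⊤ := gaussian_finite hS0
  have hκFfin : κ F < ⊤ := lt_of_le_of_lt (measure_mono (Set.subset_univ F)) hκfin
  have hac : κ ≪ volume := by
    rw [hκdef]
    unfold gaussian
    exact withDensity_absolutelyContinuous _ _
  have hvolF : 0 < volume F := by
    rw [pos_iff_ne_zero]
    intro h
    exact hF.ne' (hac h)
  have hFne : F.Nonempty := by
    by_contra h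
    rw [Set.not_nonempty_iff_eq_empty] at h
    rw [h] at hF
    simp at hF
  obtain ⟨Ustar, hUF, hUmin⟩ := exists_min hH s hFc hFne
  rw [← hJdef] at hUmin
  have huniq : ∀ V ∈ F, IsMinOn J F V → V = Ustar := by
    intro V hVF hVmin
    by_contra hne
    have hJV : J V = J Ustar :=
      le_antisymm (isMinOn_iff.1 hVmin Ustar hUF) (isMinOn_iff.1 hUmin V hVF)
    set w : Fin d → ℝ := (1/2 : ℝ) • V + (1/2 : ℝ) • Ustar with hw
    have hwF : w ∈ F := hFconv hVF hUF (by norm_num) (by norm_num) (by norm_num)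
    have hdiff : V - Ustar ≠ 0 := sub_ne_zero.2 hne
    have hpos : 0 < (V - Ustar) ⬝ᵥ H.mulVec (V - Ustar) := quad_pos hH hdiff
    have hkey : J w = (J V + J Ustar) / 2
        - (1/8) * ((V - Ustar) ⬝ᵥ H.mulVec (V - Ustar)) := by
      simp only [hJdef, hw]
      simp only [Matrix.mulVec_add, Matrix.mulVec_smul, add_dotProduct,
        dotProduct_add, smul_dotProduct, dotProduct_smul,
        Matrix.mulVec_sub, sub_dotProduct, dotProduct_sub, smul_eq_mul]
      ring
    have hcontr := isMinOn_iff.1 hVmin w hwF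
    rw [hkey, hJV] at hcontr
    linarith
  refine ⟨Ustar, hUF, hUmin, huniq, ?_⟩
  intro O hO hUO
  -- gap δ on F ∩ Oᶜ
  obtain ⟨δ, hδ, hδbound⟩ : ∃ δ > (0:ℝ), ∀ U ∈ F ∩ Oᶜ, J Ustar + δ ≤ J U := by
    rcases Set.eq_empty_or_nonempty (F ∩ Oᶜ) with hFO | hFO
    · exact ⟨1, one_pos, by simp [hFO]⟩
    · obtain ⟨V, hV, hVmin⟩ := exists_min hH s (hFc.inter hO.isClosed_compl) hFO
      rw [← hJdef] at hVmin
      have h1 : J Ustar ≤ J V := isMinOn_iff.1 hUmin V hV.1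
      rcases h1.lt_or_eq with h | h
      · exact ⟨J V - J Ustar, by linarith, fun U hU => by
          linarith [isMinOn_iff.1 hVmin U hU]⟩
      · exfalso
        have hVminF : IsMinOn J F V := isMinOn_iff.2 fun y hy => by
          rw [← h]; exact isMinOn_iff.1 hUmin y hy
        have := huniq V hV.1 hVminF
        rw [this] at hV
        exact hV.2 hUO
  -- a small open set W ⊆ F near the minimum
  obtain ⟨W, hWopen, hWne, hWF, hWJ⟩ : ∃ W : Set (Fin d → ℝ), IsOpen W ∧ W.Nonempty ∧
      W ⊆ F ∧ ∀ U ∈ W, J U ≤ J Ustar + δ/2 := by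
    have hint : (interior F).Nonempty := by
      by_contra h
      rw [Set.not_nonempty_iff_eq_empty] at h
      have hsub : F ⊆ frontier F := by
        rw [frontier, h, Set.diff_empty]
        exact subset_closure
      have hle := measure_mono (μ := volume) hsub
      rw [hFconv.addHaar_frontier volume] at hle
      exact hvolF.ne' (le_antisymm hle zero_le)
    obtain ⟨y, hy⟩ := hint
    have hz : ∃ z ∈ interior F, J z < J Ustar + δ/2 := by
      set cpath : ℝ → (Fin d → ℝ) := fun t => (1 - t) • Ustar + t • y with hcpath
      have hcc : Continuous cpath := by
        apply Continuous.add
        · exact (continuous_const.sub continuous_id).smul continuous_const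
        · exact continuous_id.smul continuous_const
      have hc0 : cpath 0 = Ustar := by simp [hcpath]
      have hT : (J ∘ cpath) ⁻¹' (Set.Iio (J Ustar + δ/2)) ∈ nhds (0:ℝ) := by
        apply (hJc.comp hcc).continuousAt.preimage_mem_nhds
        have hcomp : (J ∘ cpath) 0 = J Ustar := by
          rw [Function.comp_apply, hc0]
        rw [hcomp]
        exact Iio_mem_nhds (by linarith)
      obtain ⟨r, hr, hball⟩ := Metric.mem_nhds_iff.1 hT
      set t : ℝ := min (r/2) (1/2) with htdef
      have ht0 : 0 < t := by
        apply lt_min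
        · linarith
        · norm_num
      have ht1 : t < 1 := lt_of_le_of_lt (min_le_right _ _) (by norm_num)
      have htmem : t ∈ Metric.ball (0:ℝ) r := by
        rw [Metric.mem_ball, dist_zero_right, Real.norm_eq_abs, abs_of_pos ht0]
        exact lt_of_le_of_lt (min_le_left _ _) (by linarith)
      have hJt : J (cpath t) < J Ustar + δ/2 := by
        have := hball htmem
        simpa using this
      refine ⟨cpath t, ?_, hJt⟩
      have hseg : cpath t ∈ openSegment ℝ Ustar y :=
        ⟨1 - t, t, by linarith, ht0, by ring, rfl⟩
      exact hFconv.openSegment_self_interior_subset_interior hUF hy hseg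
    obtain ⟨z, hzint, hzJ⟩ := hz
    refine ⟨interior F ∩ J ⁻¹' (Set.Iio (J Ustar + δ/2)),
      isOpen_interior.inter (isOpen_Iio.preimage hJc), ⟨z, hzint, hzJ⟩,
      fun x hx => interior_subset hx.1, fun U hU => le_of_lt hU.2⟩
  have hWmeas : MeasurableSet W := hWopen.measurableSet
  have hκWpos : 0 < κ W := gaussian_pos hS0 hWmeas (hWopen.measure_pos volume hWne)
  -- the Gibbs measures
  set μl : ℝ → Measure (Fin d → ℝ) := fun l => κ.withDensity fun U =>
      ENNReal.ofReal (Real.exp (-(J U) / l) * F.indicator 1 U) with hμl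
  have hgind : ∀ l : ℝ, (fun U => ENNReal.ofReal (Real.exp (-(J U) / l) * F.indicator 1 U)) =
      F.indicator (fun U => ENNReal.ofReal (Real.exp (-(J U) / l))) := by
    intro l
    funext U
    by_cases hU : U ∈ F
    · simp [hU]
    · simp [hU]
  have happly : ∀ (l : ℝ) (A : Set (Fin d → ℝ)), MeasurableSet A →
      μl l A = ∫⁻ U in F ∩ A, ENNReal.ofReal (Real.exp (-(J U) / l)) ∂κ := by
    intro l A hA
    simp only [hμl]
    rw [withDensity_apply _ hA, hgind l, setLIntegral_indicator hFmeas]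
  have hupper : ∀ l : ℝ, 0 < l → ∀ A : Set (Fin d → ℝ), MeasurableSet A → ∀ b : ℝ,
      (∀ U ∈ F ∩ A, b ≤ J U) →
      μl l A ≤ ENNReal.ofReal (Real.exp (-b / l)) * κ F := by
    intro l hl A hA b hb
    rw [happly l A hA]
    calc (∫⁻ U in F ∩ A, ENNReal.ofReal (Real.exp (-(J U) / l)) ∂κ)
        ≤ ∫⁻ _ in F ∩ A, ENNReal.ofReal (Real.exp (-b / l)) ∂κ := by
          apply setLIntegral_mono measurable_const
          intro U hU
          apply ENNReal.ofReal_le_ofReal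
          apply Real.exp_le_exp.2
          exact (div_le_div_iff_of_pos_right hl).2 (neg_le_neg (hb U hU))
    _ = ENNReal.ofReal (Real.exp (-b / l)) * κ (F ∩ A) := setLIntegral_const _ _
    _ ≤ ENNReal.ofReal (Real.exp (-b / l)) * κ F :=
        mul_le_mul_right (measure_mono Set.inter_subset_left) _
  have hlower : ∀ l : ℝ, 0 < l → ∀ b : ℝ, (∀ U ∈ W, J U ≤ b) →
      ENNReal.ofReal (Real.exp (-b / l)) * κ W ≤ μl l Set.univ := by
    intro l hl b hb
    have h1 : μl l W ≤ μl l Set.univ := measure_mono (Set.subset_univ W)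
    refine le_trans ?_ h1
    rw [happly l W hWmeas, Set.inter_eq_self_of_subset_right hWF]
    calc ENNReal.ofReal (Real.exp (-b / l)) * κ W
        = ∫⁻ _ in W, ENNReal.ofReal (Real.exp (-b / l)) ∂κ := (setLIntegral_const _ _).symm
    _ ≤ ∫⁻ U in W, ENNReal.ofReal (Real.exp (-(J U) / l)) ∂κ := by
        apply setLIntegral_mono
          (ENNReal.continuous_ofReal.comp (Real.continuous_exp.comp (hJc.neg.div_const l))).measurable
        intro U hU
        apply ENNReal.ofReal_le_ofReal
        apply Real.exp_le_exp.2
        exact (div_le_div_iff_of_pos_right hl).2 (neg_le_neg (hb U hU))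
  set G : ℝ → ℝ≥0∞ := fun l => (μl l Set.univ)⁻¹ * μl l Oᶜ with hG
  have hmain : ∀ l : ℝ, 0 < l →
      (μl l Set.univ)⁻¹ * μl l O = 1 - G l ∧
      G l ≤ ENNReal.ofReal (Real.exp (-(δ/2) / l)) * ((κ W)⁻¹ * κ F) := by
    intro l hl
    have hTlb : ENNReal.ofReal (Real.exp (-(J Ustar + δ/2) / l)) * κ W ≤ μl l Set.univ :=
      hlower l hl _ hWJ
    have hTub : μl l Set.univ ≤ ENNReal.ofReal (Real.exp (-(J Ustar) / l)) * κ F :=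
      hupper l hl Set.univ MeasurableSet.univ _ (fun U hU => isMinOn_iff.1 hUmin U hU.1)
    have hOub : μl l Oᶜ ≤ ENNReal.ofReal (Real.exp (-(J Ustar + δ) / l)) * κ F :=
      hupper l hl Oᶜ hO.isClosed_compl.measurableSet _ hδbound
    have hT0 : μl l Set.univ ≠ 0 := by
      refine (lt_of_lt_of_le ?_ hTlb).ne'
      exact ENNReal.mul_pos (ENNReal.ofReal_pos.2 (Real.exp_pos _)).ne' hκWpos.ne'
    have hTtop : μl l Set.univ ≠ ⊤ :=
      (lt_of_le_of_lt hTub (ENNReal.mul_lt_top ENNReal.ofReal_lt_top hκFfin)).ne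
    have hOfin : μl l Oᶜ ≠ ⊤ :=
      ((measure_mono (Set.subset_univ _)).trans_lt (lt_top_iff_ne_top.2 hTtop)).ne
    have hsplit : μl l O + μl l Oᶜ = μl l Set.univ := measure_add_measure_compl hO.measurableSet
    constructor
    · have h1 : (μl l Set.univ)⁻¹ * μl l O + G l = 1 := by
        simp only [hG]
        rw [← mul_add, hsplit, ENNReal.inv_mul_cancel hT0 hTtop]
      have h2 : G l ≠ ⊤ := by
        simp only [hG]
        exact ENNReal.mul_ne_top (ENNReal.inv_ne_top.2 hT0) hOfin
      rw [← h1, ENNReal.add_sub_cancel_right h2]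
    · have h1 : G l ≤ (ENNReal.ofReal (Real.exp (-(J Ustar + δ/2) / l)) * κ W)⁻¹ *
          (ENNReal.ofReal (Real.exp (-(J Ustar + δ) / l)) * κ F) := by
        simp only [hG]
        exact mul_le_mul' (ENNReal.inv_le_inv' hTlb) hOub
      refine h1.trans_eq ?_
      have he : Real.exp (-(J Ustar + δ) / l) =
          Real.exp (-(J Ustar + δ/2) / l) * Real.exp (-(δ/2) / l) := by
        rw [← Real.exp_add]
        congr 1
        ring
      have hne1 : ENNReal.ofReal (Real.exp (-(J Ustar + δ/2) / l)) ≠ 0 :=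
        (ENNReal.ofReal_pos.2 (Real.exp_pos _)).ne'
      have hne2 : ENNReal.ofReal (Real.exp (-(J Ustar + δ/2) / l)) ≠ ⊤ := ENNReal.ofReal_ne_top
      rw [he, ENNReal.ofReal_mul (Real.exp_nonneg _),
        ENNReal.mul_inv (Or.inl hne1) (Or.inl hne2)]
      rw [show (ENNReal.ofReal (Real.exp (-(J Ustar + δ/2) / l)))⁻¹ * (κ W)⁻¹ *
          (ENNReal.ofReal (Real.exp (-(J Ustar + δ/2) / l)) *
            ENNReal.ofReal (Real.exp (-(δ/2) / l)) * κ F)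
          = ((ENNReal.ofReal (Real.exp (-(J Ustar + δ/2) / l)))⁻¹ *
              ENNReal.ofReal (Real.exp (-(J Ustar + δ/2) / l))) *
            (ENNReal.ofReal (Real.exp (-(δ/2) / l)) * ((κ W)⁻¹ * κ F)) from by ring]
      rw [ENNReal.inv_mul_cancel hne1 hne2, one_mul]
  have hGlim : Tendsto G (nhdsWithin (0:ℝ) (Set.Ioi 0)) (nhds 0) := by
    have hub : Tendsto (fun l : ℝ => ENNReal.ofReal (Real.exp (-(δ/2) / l)) * ((κ W)⁻¹ * κ F))
        (nhdsWithin (0:ℝ) (Set.Ioi 0)) (nhds 0) := by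
      have h2 : Tendsto (fun l : ℝ => δ/2 * l⁻¹) (nhdsWithin (0:ℝ) (Set.Ioi 0)) atTop :=
        tendsto_inv_nhdsGT_zero.const_mul_atTop (by positivity)
      have h3 : Tendsto (fun l : ℝ => -(δ/2 * l⁻¹)) (nhdsWithin (0:ℝ) (Set.Ioi 0)) atBot :=
        tendsto_neg_atTop_atBot.comp h2
      have h1 : Tendsto (fun l : ℝ => -(δ/2) / l) (nhdsWithin (0:ℝ) (Set.Ioi 0)) atBot := by
        refine h3.congr fun l => ?_
        rw [div_eq_mul_inv]
        ring
      have h4 : Tendsto (fun l : ℝ => Real.exp (-(δ/2) / l))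
          (nhdsWithin (0:ℝ) (Set.Ioi 0)) (nhds 0) := Real.tendsto_exp_atBot.comp h1
      have h5 : Tendsto (fun l : ℝ => ENNReal.ofReal (Real.exp (-(δ/2) / l)))
          (nhdsWithin (0:ℝ) (Set.Ioi 0)) (nhds 0) := by
        have := (ENNReal.continuous_ofReal.tendsto 0).comp h4
        simpa [Function.comp_def] using this
      have hC : (κ W)⁻¹ * κ F ≠ ⊤ :=
        ENNReal.mul_ne_top (ENNReal.inv_ne_top.2 hκWpos.ne') hκFfin.ne
      have := ENNReal.Tendsto.mul_const h5 (Or.inr hC)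
      simpa using this
    refine tendsto_of_tendsto_of_tendsto_of_le_of_le' tendsto_const_nhds hub ?_ ?_
    · exact Filter.Eventually.of_forall fun l => zero_le
    · exact Filter.eventually_of_mem self_mem_nhdsWithin fun l hl => (hmain l hl).2
  have hone : Tendsto (fun l : ℝ => 1 - G l) (nhdsWithin (0:ℝ) (Set.Ioi 0)) (nhds 1) := by
    have hc := (ENNReal.continuous_sub_left (by norm_num : (1:ℝ≥0∞) ≠ ⊤)).tendsto 0
    have := hc.comp hGlim
    simpa [Function.comp_def] using this
  have hfinal : Tendsto (fun l : ℝ => (μl l Set.univ)⁻¹ * μl l O)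
      (nhdsWithin (0:ℝ) (Set.Ioi 0)) (nhds 1) :=
    hone.congr' (eventuallyEq_of_mem self_mem_nhdsWithin fun l hl => ((hmain l hl).1).symm)
  simpa only [hμl, hκdef, hJdef] using hfinal
end

section
/- Let η > 0, τ ≥ 0, and define the smooth feasibility weight r̄(g) := exp(−η·max(Σ_{j=1}^p h(g_j) − τ, 0)) and the hard weight r(g) := 1 if g_j ≤ 0 for all j, else 0. Suppose |h(γ) − max(γ,0)| ≤ δ for all γ ∈ [−B,B] and τ ≥ p·δ. Then for all g with ‖g‖_∞ ≤ B: (i) if g is feasible then r̄(g) = 1 = r(g); (ii) if s(g) := Σ_j max(g_j,0) > (τ + p·δ)/1 then r̄(g) ≤ exp(−η·(s(g) − τ − p·δ)). In particular r̄(g) → r(g) as η → ∞ for every g with s(g) ∉ [0, τ + p·δ] \ {0}. -/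
open Classical

/-- Properties of the smooth feasibility weight
`r̄_η(g) = exp(-η · max(Σⱼ h(gⱼ) - τ, 0))` versus the hard weight
`r(g) = 1` if `g ≤ 0` componentwise, else `0`: (i) feasible samples get weight one;
(ii) strongly infeasible samples are exponentially suppressed; and in particular
`r̄_η(g) → r(g)` as `η → ∞` whenever `Σⱼ max(gⱼ,0) = 0` or `Σⱼ max(gⱼ,0) > τ + p·δ`. -/
theorem stmt16 {p : ℕ} (B δ τ η : ℝ) (hη : 0 < η) (hτ0 : 0 ≤ τ)
    (h : ℝ → ℝ) (happrox : ∀ γ ∈ Set.Icc (-B) B, |h γ - max γ 0| ≤ δ)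
    (hτ : p * δ ≤ τ) :
    (∀ g : Fin p → ℝ, (∀ j, |g j| ≤ B) → (∀ j, g j ≤ 0) →
        Real.exp (-η * max ((∑ j, h (g j)) - τ) 0) = 1 ∧
        (if ∀ j, g j ≤ 0 then (1 : ℝ) else 0) = 1) ∧
    (∀ g : Fin p → ℝ, (∀ j, |g j| ≤ B) → τ + p * δ < ∑ j, max (g j) 0 →
        Real.exp (-η * max ((∑ j, h (g j)) - τ) 0)
          ≤ Real.exp (-η * ((∑ j, max (g j) 0) - τ - p * δ))) ∧
    (∀ g : Fin p → ℝ, (∀ j, |g j| ≤ B) →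
        ((∑ j, max (g j) 0) = 0 ∨ τ + p * δ < ∑ j, max (g j) 0) →
        Filter.Tendsto (fun η' : ℝ => Real.exp (-η' * max ((∑ j, h (g j)) - τ) 0))
          Filter.atTop (nhds (if ∀ j, g j ≤ 0 then (1 : ℝ) else 0))) := by
  -- basic bound: each h (g j) within δ of max (g j) 0
  have hmem : ∀ g : Fin p → ℝ, (∀ j, |g j| ≤ B) → ∀ j,
      |h (g j) - max (g j) 0| ≤ δ := by
    intro g hB j
    exact happrox (g j) ⟨neg_le_of_abs_le (hB j), le_of_abs_le (hB j)⟩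
  have hupper : ∀ g : Fin p → ℝ, (∀ j, |g j| ≤ B) →
      (∑ j, h (g j)) ≤ (∑ j, max (g j) 0) + p * δ := by
    intro g hB
    have : (∑ j, h (g j)) ≤ ∑ j : Fin p, (max (g j) 0 + δ) := by
      apply Finset.sum_le_sum
      intro j _
      have := (abs_le.mp (hmem g hB j)).2
      linarith
    simpa [Finset.sum_add_distrib, mul_comm] using this
  have hlower : ∀ g : Fin p → ℝ, (∀ j, |g j| ≤ B) →
      (∑ j, max (g j) 0) - p * δ ≤ (∑ j, h (g j)) := by
    intro g hB
    have : (∑ j : Fin p, (max (g j) 0 - δ)) ≤ ∑ j, h (g j) := by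
      apply Finset.sum_le_sum
      intro j _
      have := (abs_le.mp (hmem g hB j)).1
      linarith
    simpa [Finset.sum_sub_distrib, mul_comm] using this
  -- feasible case: the max is 0
  have key1 : ∀ g : Fin p → ℝ, (∀ j, |g j| ≤ B) → (∀ j, g j ≤ 0) →
      max ((∑ j, h (g j)) - τ) 0 = 0 := by
    intro g hB hle
    have hs : (∑ j, max (g j) 0) = 0 := by
      apply Finset.sum_eq_zero
      intro j _
      exact max_eq_right (hle j)
    have := hupper g hB
    rw [hs] at this
    have : (∑ j, h (g j)) - τ ≤ 0 := by linarith
    exact max_eq_right this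
  refine ⟨?_, ?_, ?_⟩
  · intro g hB hle
    rw [key1 g hB hle]
    simp [hle]
  · intro g hB hs
    have h1 : (∑ j, max (g j) 0) - τ - p * δ ≤ (∑ j, h (g j)) - τ := by
      have := hlower g hB; linarith
    have h2 : (∑ j, max (g j) 0) - τ - p * δ ≤ max ((∑ j, h (g j)) - τ) 0 :=
      le_trans h1 (le_max_left _ _)
    apply Real.exp_le_exp.mpr
    have : -η ≤ 0 := by linarith
    exact mul_le_mul_of_nonpos_left h2 this
  · intro g hB hcase
    rcases hcase with hs | hs
    · -- all g j ≤ 0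
      have hle : ∀ j, g j ≤ 0 := by
        intro j
        have hnn : ∀ j ∈ Finset.univ, (0:ℝ) ≤ max (g j) 0 := fun j _ => le_max_right _ _
        have := (Finset.sum_eq_zero_iff_of_nonneg hnn).mp hs j (Finset.mem_univ j)
        have := max_eq_right_iff.mp this
        -- this : g j ≤ 0? max (g j) 0 = 0 → g j ≤ 0
        exact this
      rw [if_pos hle]
      have heq : ∀ η' : ℝ, Real.exp (-η' * max ((∑ j, h (g j)) - τ) 0) = 1 := by
        intro η'
        rw [key1 g hB hle]; simp
      simp only [heq]
      exact tendsto_const_nhds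
    · -- strongly infeasible
      have hpδ : 0 ≤ p * δ := by
        have hppos : 0 < p := by
          by_contra hp
          have : p = 0 := by omega
          subst this
          simp at hs; linarith
      -- δ ≥ 0 since 0 ∈ Icc (-B) B
        obtain ⟨j⟩ : Nonempty (Fin p) := ⟨⟨0, hppos⟩⟩
        have hB0 : 0 ≤ B := le_trans (abs_nonneg _) (hB j)
        have hδ : 0 ≤ δ := by
          have := happrox 0 ⟨by linarith, hB0⟩
          simpa using le_trans (abs_nonneg _) this
        positivity
      have hnot : ¬ ∀ j, g j ≤ 0 := by
        intro hle
        have hz : (∑ j, max (g j) 0) = 0 :=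
          Finset.sum_eq_zero fun j _ => max_eq_right (hle j)
        rw [hz] at hs; linarith
      rw [if_neg hnot]
      set c := max ((∑ j, h (g j)) - τ) 0 with hc
      have hcpos : 0 < c := by
        have := hlower g hB
        have h1 : 0 < (∑ j, h (g j)) - τ := by linarith
        exact lt_of_lt_of_le h1 (le_max_left _ _)
      have hlin : Filter.Tendsto (fun η' : ℝ => -η' * c) Filter.atTop Filter.atBot := by
        have h1 := Filter.Tendsto.const_mul_atTop_of_neg
          (show -c < 0 by linarith) (Filter.tendsto_id (α := ℝ))
        have heq : (fun η' : ℝ => -η' * c) = fun x : ℝ => -c * id x := by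
          funext x; simp only [id]; ring
        rw [heq]; exact h1
      have := Real.tendsto_exp_atBot.comp hlin
      exact this
end
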